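/- Let H = ⟨g₁, …, gₙ⟩ ≤ G be a finitely generated subgroup, and suppose g₁ has maximal length among the generators, i.e. l(g₁) = max_{j=1,…,n} l(g_j). Assume that H is conjugate in G to a subgroup of A or of B and that l(g₁) > 1. Then l(g₁) is odd, say l(g₁) = 2s+1 with s ≥ 1, and for any reduced expression g₁ = k₁⋯k_{2s+1}, the conjugate subgroup (k₁⋯k_s)⁻¹ H (k₁⋯k_s) is contained in A or in B. -/

import Mathlib

variable {G : Type*} [Group G]

/-- A reduced expression with respect to the factors `A` and `B`: every letter lies in
`(A ∪ B) \ (A ∩ B)` and consecutive letters lie in different factors. -/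
def IsReducedWord (A B : Subgroup G) (w : List G) : Prop :=
  (∀ x ∈ w, (x ∈ A ∨ x ∈ B) ∧ ¬(x ∈ A ∧ x ∈ B)) ∧
    w.Chain' fun x y => ¬(x ∈ A ∧ y ∈ A) ∧ ¬(x ∈ B ∧ y ∈ B)

/-- `G` is the internal amalgamated free product of its subgroups `A` and `B` over `A ⊓ B`:
`A` and `B` generate `G` and no reduced word of length at least `2` represents the identity
(this is the classical characterization of the canonical map from the abstract amalgamated
free product onto `G` being an isomorphism). -/
def IsAmalgamatedProduct (A B : Subgroup G) : Prop :=
  A ⊔ B = ⊤ ∧ ∀ w : List G, IsReducedWord A B w → 2 ≤ w.length → w.prod ≠ 1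

/-- The length `l(g)` of an element: the (common) number of letters of a reduced expression
of `g`; it is `0` for elements of `A ⊓ B` (which admit no reduced expression). -/
noncomputable def amalgLen (A B : Subgroup G) (g : G) : ℕ :=
  sInf {r | ∃ w : List G, IsReducedWord A B w ∧ w.prod = g ∧ w.length = r}

/-- A subgroup `H` is bounded if the lengths of its elements are bounded. -/
def BoundedSubgroup (A B : Subgroup G) (H : Subgroup G) : Prop :=
  ∃ N : ℕ, ∀ h ∈ H, amalgLen A B h ≤ N

/-- An element is bounded if the cyclic subgroup it generates is bounded. -/
def BoundedElement (A B : Subgroup G) (g : G) : Prop :=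
  BoundedSubgroup A B (Subgroup.zpowers g)


namespace AmalgProof

variable {A B : Subgroup G}

lemma red_comm {w : List G} (h : IsReducedWord A B w) : IsReducedWord B A w := by
  obtain ⟨h1, h2⟩ := h
  refine ⟨fun x hx => ⟨(h1 x hx).1.symm, fun hc => (h1 x hx).2 hc.symm⟩, ?_⟩
  exact h2.imp fun {a b} hxy => ⟨hxy.2, hxy.1⟩

lemma amalg_comm (h : IsAmalgamatedProduct A B) : IsAmalgamatedProduct B A :=
  ⟨by rw [sup_comm]; exact h.1, fun w hw => h.2 w (red_comm hw)⟩

lemma red_prefix {w v : List G} (h : IsReducedWord A B w) (hp : v <+: w) :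
    IsReducedWord A B v :=
  ⟨fun x hx => h.1 x (hp.subset hx), h.2.prefix hp⟩

lemma red_tail {x : G} {w : List G} (h : IsReducedWord A B (x :: w)) : IsReducedWord A B w :=
  ⟨fun z hz => h.1 z (List.mem_cons_of_mem _ hz), h.2.tail⟩

lemma red_cons {x : G} {w : List G} (hx1 : x ∈ A ∨ x ∈ B) (hx2 : ¬(x ∈ A ∧ x ∈ B))
    (hw : IsReducedWord A B w)
    (hrel : ∀ y ∈ w.head?, ¬(x ∈ A ∧ y ∈ A) ∧ ¬(x ∈ B ∧ y ∈ B)) :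
    IsReducedWord A B (x :: w) := by
  refine ⟨?_, List.isChain_cons.2 ⟨hrel, hw.2⟩⟩
  intro z hz
  rcases List.mem_cons.1 hz with rfl | hz
  · exact ⟨hx1, hx2⟩
  · exact hw.1 z hz

lemma red_congr_head {x x' : G} {w : List G} (h : IsReducedWord A B (x :: w))
    (hA : x' ∈ A ↔ x ∈ A) (hB : x' ∈ B ↔ x ∈ B) : IsReducedWord A B (x' :: w) := by
  have hx := h.1 x (List.mem_cons_self)
  have h2 := List.isChain_cons.1 h.2
  refine red_cons ?_ ?_ (red_tail h) ?_
  · rcases hx.1 with h' | h'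
    · exact Or.inl (hA.2 h')
    · exact Or.inr (hB.2 h')
  · exact fun hc => hx.2 ⟨hA.1 hc.1, hB.1 hc.2⟩
  · intro y hy
    have := h2.1 y hy
    exact ⟨fun hc => this.1 ⟨hA.1 hc.1, hc.2⟩, fun hc => this.2 ⟨hB.1 hc.1, hc.2⟩⟩

lemma red_singleton {x : G} (h1 : x ∈ A ∨ x ∈ B) (h2 : ¬(x ∈ A ∧ x ∈ B)) :
    IsReducedWord A B [x] := by
  refine red_cons h1 h2 ⟨fun z hz => absurd hz (List.not_mem_nil), List.isChain_nil⟩ ?_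
  simp

/-- Lemma A: a reduced word whose product lies in `A ⊓ B` is empty. -/
lemma red_nil_of_inter (hG : IsAmalgamatedProduct A B) {w : List G}
    (hw : IsReducedWord A B w) (hA : w.prod ∈ A) (hB : w.prod ∈ B) : w = [] := by
  match w with
  | [] => rfl
  | [x] =>
    exfalso
    exact (hw.1 x (by simp)).2 ⟨by simpa using hA, by simpa using hB⟩
  | x :: y :: t =>
    exfalso
    set p := (x :: y :: t).prod with hp
    have hred : IsReducedWord A B ((p⁻¹ * x) :: y :: t) :=
      red_congr_head hw (mul_mem_cancel_left (inv_mem hA)) (mul_mem_cancel_left (inv_mem hB))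
    refine hG.2 _ hred (by simp) ?_
    have : ((p⁻¹ * x) :: y :: t).prod = p⁻¹ * p := by
      rw [hp]; simp [List.prod_cons, mul_assoc]
    rw [this, inv_mul_cancel]

lemma aux_notMemA (hG : IsAmalgamatedProduct A B) {x : G} {t : List G}
    (hw : IsReducedWord A B (x :: t)) (hx : x ∉ A) (hp : (x :: t).prod ∈ A) : False := by
  by_cases hqB : (x :: t).prod ∈ B
  · exact (List.cons_ne_nil x t) (red_nil_of_inter hG hw hp hqB)
  · have hred : IsReducedWord A B ((x :: t).prod⁻¹ :: x :: t) := by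
      refine red_cons (Or.inl (inv_mem hp)) (fun hc => hqB (inv_mem_iff.1 hc.2)) hw ?_
      intro y hy
      simp only [List.head?_cons, Option.mem_def, Option.some.injEq] at hy
      subst hy
      exact ⟨fun hc => hx hc.2, fun hc => hqB (inv_mem_iff.1 hc.1)⟩
    refine hG.2 _ hred (by simp) ?_
    simp [List.prod_cons, mul_assoc]

/-- Lemma C (half): a reduced word of length `≥ 2` has product outside `A`. -/
lemma red_prod_notMemA (hG : IsAmalgamatedProduct A B) {w : List G}
    (hw : IsReducedWord A B w) (h2 : 2 ≤ w.length) : w.prod ∉ A := by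
  match w with
  | x :: y :: t =>
    intro hp
    by_cases hx : x ∈ A
    · have hrel := (List.isChain_cons.1 hw.2).1 y (by simp)
      have hyA : y ∉ A := fun h => hrel.1 ⟨hx, h⟩
      refine aux_notMemA hG (red_tail hw) hyA ?_
      have : (y :: t).prod = x⁻¹ * (x :: y :: t).prod := by simp [List.prod_cons, mul_assoc]
      rw [this]
      exact mul_mem (inv_mem hx) hp
    · exact aux_notMemA hG hw hx hp

lemma red_prod_notMemB (hG : IsAmalgamatedProduct A B) {w : List G}
    (hw : IsReducedWord A B w) (h2 : 2 ≤ w.length) : w.prod ∉ B :=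
  red_prod_notMemA (amalg_comm hG) (red_comm hw) h2

lemma inf_mem_comm {x : G} (h : x ∈ A ⊓ B) : x ∈ B ⊓ A := ⟨h.2, h.1⟩

lemma rigidity_core (hG : IsAmalgamatedProduct A B) {N : ℕ}
    (IH : ∀ w v : List G, w.length ≤ N → IsReducedWord A B w → IsReducedWord A B v →
      w.prod = v.prod →
      w.length = v.length ∧ ∀ i, ((w.take i).prod)⁻¹ * (v.take i).prod ∈ A ⊓ B)
    {a b : G} {w' v' : List G} (hw : IsReducedWord A B (a :: w')) (hv : IsReducedWord A B (b :: v'))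
    (hlenN : w'.length ≤ N) (hw' : w' ≠ []) (hv' : v' ≠ [])
    (haA : a ∈ A) (hp : (a :: w').prod = (b :: v').prod) :
    (a :: w').length = (b :: v').length ∧
      ∀ i, (((a :: w').take i).prod)⁻¹ * (((b :: v').take i).prod) ∈ A ⊓ B := by
  obtain ⟨e, w'', rfl⟩ := List.exists_cons_of_ne_nil hw'
  obtain ⟨f, v'', rfl⟩ := List.exists_cons_of_ne_nil hv'
  have haB : a ∉ B := fun h => (hw.1 a (by simp)).2 ⟨haA, h⟩
  have hrelae := (List.isChain_cons.1 hw.2).1 e (by simp)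
  have heA : e ∉ A := fun h => hrelae.1 ⟨haA, h⟩
  have heB : e ∈ B := ((hw.1 e (by simp)).1).resolve_left heA
  by_cases hbA : b ∈ A
  · -- heads in the same factor A
    have hbB : b ∉ B := fun h => (hv.1 b (by simp)).2 ⟨hbA, h⟩
    have hrelbf := (List.isChain_cons.1 hv.2).1 f (by simp)
    have hfA : f ∉ A := fun h => hrelbf.1 ⟨hbA, h⟩
    have hfB : f ∈ B := ((hv.1 f (by simp)).1).resolve_left hfA
    set c := a⁻¹ * b with hc
    have hcA : c ∈ A := mul_mem (inv_mem haA) hbA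
    have hprod : (e :: w'').prod = c * (f :: v'').prod := by
      have : a * (e :: w'').prod = b * (f :: v'').prod := by
        simpa [List.prod_cons, mul_assoc] using hp
      rw [hc, mul_assoc, ← this, inv_mul_cancel_left]
    by_cases hcB : c ∈ B
    · -- c ∈ A ⊓ B : absorb into the head of v'
      have hredN : IsReducedWord A B ((c * f) :: v'') :=
        red_congr_head (red_tail hv) (mul_mem_cancel_left hcA) (mul_mem_cancel_left hcB)
      have hprodN : ((c * f) :: v'').prod = c * (f :: v'').prod := by
        simp [List.prod_cons, mul_assoc]
      obtain ⟨hlen, hpref⟩ := IH (e :: w'') ((c * f) :: v'') hlenN (red_tail hw) hredN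
        (by rw [hprod, hprodN])
      constructor
      · simpa using hlen
      · intro i
        match i with
        | 0 => simpa using one_mem (A ⊓ B)
        | 1 =>
          simp only [List.take_succ_cons, List.take_zero, List.prod_cons, List.prod_nil,
            mul_one]
          exact ⟨hcA, hcB⟩
        | (j + 2) =>
          have key := hpref (j + 1)
          have htake : (((c * f) :: v'').take (j + 1)).prod =
              c * ((f :: v'').take (j + 1)).prod := by
            simp [List.take_succ_cons, List.prod_cons, mul_assoc]
          rw [htake] at key
          have expand : (((a :: e :: w'').take (j+2)).prod)⁻¹ *
              (((b :: f :: v'').take (j+2)).prod) =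
              (((e :: w'').take (j+1)).prod)⁻¹ * (c * (((f :: v'').take (j+1)).prod)) := by
            simp only [List.take_succ_cons, List.prod_cons, mul_inv_rev, hc]
            group
          rw [expand]
          exact key
    · -- c ∈ A \ B : contradiction via prefix rigidity
      exfalso
      have hredN : IsReducedWord A B (c :: f :: v'') := by
        refine red_cons (Or.inl hcA) (fun h => hcB h.2) (red_tail hv) ?_
        intro y hy
        simp only [List.head?_cons, Option.mem_def, Option.some.injEq] at hy
        subst hy
        exact ⟨fun h => hfA h.2, fun h => hcB h.1⟩
      obtain ⟨-, hpref⟩ := IH (e :: w'') (c :: f :: v'') hlenN (red_tail hw) hredN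
        (by rw [hprod]; simp [List.prod_cons, mul_assoc])
      have := hpref 1
      simp only [List.take_succ_cons, List.take_zero, List.prod_cons, List.prod_nil, mul_one] at this
      exact heA (by simpa using mul_mem hcA (inv_mem this.1))
  · -- heads in different factors : contradiction
    exfalso
    have hbB : b ∈ B := ((hv.1 b (by simp)).1).resolve_left hbA
    have hredN : IsReducedWord A B (a⁻¹ :: b :: f :: v'') := by
      refine red_cons (Or.inl (inv_mem haA)) (fun h => haB (inv_mem_iff.1 h.2)) hv ?_
      intro y hy
      simp only [List.head?_cons, Option.mem_def, Option.some.injEq] at hy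
      subst hy
      exact ⟨fun h => hbA h.2, fun h => haB (inv_mem_iff.1 h.1)⟩
    obtain ⟨-, hpref⟩ := IH (e :: w'') (a⁻¹ :: b :: f :: v'') hlenN (red_tail hw) hredN
      (by
        have h2 : a * (e * w''.prod) = b * (f * v''.prod) := by
          simpa [List.prod_cons, mul_assoc] using hp
        simp only [List.prod_cons]
        rw [← h2, inv_mul_cancel_left])
    have := hpref 1
    simp only [List.take_succ_cons, List.take_zero, List.prod_cons, List.prod_nil, mul_one] at this
    exact heA (by simpa using mul_mem (inv_mem haA) (inv_mem this.1))

lemma rigidity_all (hG : IsAmalgamatedProduct A B) :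
    ∀ N, ∀ w v : List G, w.length ≤ N → IsReducedWord A B w → IsReducedWord A B v →
      w.prod = v.prod →
      w.length = v.length ∧ ∀ i, ((w.take i).prod)⁻¹ * (v.take i).prod ∈ A ⊓ B := by
  intro N
  induction N with
  | zero =>
    intro w v hlen hw hv hp
    have hwnil : w = [] := List.length_eq_zero_iff.1 (Nat.le_zero.1 hlen)
    subst hwnil
    have hvnil : v = [] := red_nil_of_inter hG hv (by rw [← hp]; simpa using one_mem A)
      (by rw [← hp]; simpa using one_mem B)
    subst hvnil
    exact ⟨rfl, fun i => by simpa using one_mem (A ⊓ B)⟩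
  | succ N IH =>
    intro w v hlen hw hv hp
    by_cases hA : w.prod ∈ A <;> by_cases hB : w.prod ∈ B
    · have hwnil := red_nil_of_inter hG hw hA hB
      have hvnil := red_nil_of_inter hG hv (hp ▸ hA) (hp ▸ hB)
      subst hwnil; subst hvnil
      exact ⟨rfl, fun i => by simpa using one_mem (A ⊓ B)⟩
    · -- prod ∈ A \ B : both singletons
      match w, v with
      | [], _ => exact absurd (one_mem B) (by simpa using hB)
      | _, [] => exact absurd (one_mem B) (by rw [hp] at hB; simpa using hB)
      | [x], [x'] =>
        have : x = x' := by simpa using hp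
        subst this
        refine ⟨rfl, fun i => ?_⟩
        match i with
        | 0 => simpa using one_mem (A ⊓ B)
        | (j+1) => simpa using one_mem (A ⊓ B)
      | [x], (x' :: y' :: t') => exact absurd (hp ▸ hA) (red_prod_notMemA hG hv (by simp))
      | (x :: y :: t), _ => exact absurd hA (red_prod_notMemA hG hw (by simp))
    · -- prod ∈ B \ A : both singletons
      match w, v with
      | [], _ => exact absurd (one_mem A) (by simpa using hA)
      | _, [] => exact absurd (one_mem A) (by rw [hp] at hA; simpa using hA)
      | [x], [x'] =>
        have : x = x' := by simpa using hp
        subst this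
        refine ⟨rfl, fun i => ?_⟩
        match i with
        | 0 => simpa using one_mem (A ⊓ B)
        | (j+1) => simpa using one_mem (A ⊓ B)
      | [x], (x' :: y' :: t') => exact absurd (hp ▸ hB) (red_prod_notMemB hG hv (by simp))
      | (x :: y :: t), _ => exact absurd hB (red_prod_notMemB hG hw (by simp))
    · -- prod outside A ∪ B : recurse
      match w, v with
      | [], _ => exact absurd (one_mem A) (by simpa using hA)
      | _, [] => exact absurd (one_mem A) (by rw [hp] at hA; simpa using hA)
      | [x], _ =>
        rcases (hw.1 x (by simp)).1 with h | h
        · exact absurd h (by simpa using hA)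
        · exact absurd h (by simpa using hB)
      | _, [x'] =>
        rcases (hv.1 x' (by simp)).1 with h | h
        · exact absurd h (by rw [hp] at hA; simpa using hA)
        · exact absurd h (by rw [hp] at hB; simpa using hB)
      | (a :: e :: w''), (b :: f :: v'') =>
        have hlenN : (e :: w'').length ≤ N := by simpa using hlen
        by_cases haA : a ∈ A
        · exact rigidity_core hG IH hw hv hlenN (by simp) (by simp) haA hp
        · have haB : a ∈ B := ((hw.1 a (by simp)).1).resolve_left haA
          have IH' : ∀ w v : List G, w.length ≤ N → IsReducedWord B A w → IsReducedWord B A v →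
              w.prod = v.prod →
              w.length = v.length ∧ ∀ i, ((w.take i).prod)⁻¹ * (v.take i).prod ∈ B ⊓ A := by
            intro w v h1 h2 h3 h4
            obtain ⟨g1, g2⟩ := IH w v h1 (red_comm h2) (red_comm h3) h4
            exact ⟨g1, fun i => inf_mem_comm (g2 i)⟩
          obtain ⟨g1, g2⟩ := rigidity_core (amalg_comm hG) IH' (red_comm hw) (red_comm hv)
            hlenN (by simp) (by simp) haB hp
          exact ⟨g1, fun i => inf_mem_comm (g2 i)⟩

lemma rigidity (hG : IsAmalgamatedProduct A B) {w v : List G}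
    (hw : IsReducedWord A B w) (hv : IsReducedWord A B v) (hp : w.prod = v.prod) :
    w.length = v.length ∧ ∀ i, ((w.take i).prod)⁻¹ * (v.take i).prod ∈ A ⊓ B :=
  rigidity_all hG w.length w v le_rfl hw hv hp

lemma red_invRev {w : List G} (h : IsReducedWord A B w) :
    IsReducedWord A B ((w.map fun x => x⁻¹).reverse) := by
  constructor
  · intro x hx
    simp only [List.mem_reverse, List.mem_map] at hx
    obtain ⟨y, hy, rfl⟩ := hx
    have := h.1 y hy
    exact ⟨this.1.imp inv_mem inv_mem,
      fun hc => this.2 ⟨inv_mem_iff.1 hc.1, inv_mem_iff.1 hc.2⟩⟩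
  · unfold List.Chain'
    rw [List.isChain_reverse]
    refine (List.isChain_map _).2 (h.2.imp ?_)
    intro x y hxy
    exact ⟨fun hc => hxy.1 ⟨inv_mem_iff.1 hc.2, inv_mem_iff.1 hc.1⟩,
      fun hc => hxy.2 ⟨inv_mem_iff.1 hc.2, inv_mem_iff.1 hc.1⟩⟩

lemma prod_invRev (w : List G) : ((w.map fun x => x⁻¹).reverse).prod = w.prod⁻¹ :=
  (List.prod_inv_reverse w).symm

/-- `x` lies in the amalgamated base or admits a reduced expression. -/
def HasRed (A B : Subgroup G) (x : G) : Prop :=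
  (x ∈ A ∧ x ∈ B) ∨ ∃ w, IsReducedWord A B w ∧ w.prod = x

lemma hasRed_comm {x : G} (h : HasRed A B x) : HasRed B A x := by
  rcases h with ⟨h1, h2⟩ | ⟨w, hw, hp⟩
  · exact Or.inl ⟨h2, h1⟩
  · exact Or.inr ⟨w, red_comm hw, hp⟩

lemma mul_letter_inter {z : G} (hzA : z ∈ A) (hzB : z ∈ B) (w : List G)
    (hw : IsReducedWord A B w) :
    (z * w.prod ∈ A ∧ z * w.prod ∈ B) ∨
      ∃ w', IsReducedWord A B w' ∧ w'.prod = z * w.prod ∧ w'.length ≤ w.length := by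
  match w with
  | [] => exact Or.inl ⟨by simpa using hzA, by simpa using hzB⟩
  | (h :: t) =>
    refine Or.inr ⟨(z * h) :: t, red_congr_head hw (mul_mem_cancel_left hzA)
      (mul_mem_cancel_left hzB), by simp [List.prod_cons, mul_assoc], le_rfl⟩

lemma mul_letter_A {z : G} (hzA : z ∈ A) (hzB : z ∉ B) (w : List G)
    (hw : IsReducedWord A B w) :
    (z * w.prod ∈ A ∧ z * w.prod ∈ B) ∨
      ∃ w', IsReducedWord A B w' ∧ w'.prod = z * w.prod ∧ w'.length ≤ w.length + 1 := by
  match w with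
  | [] => exact Or.inr ⟨[z], red_singleton (Or.inl hzA) (fun hc => hzB hc.2), by simp, by simp⟩
  | (h :: t) =>
    by_cases hhA : h ∈ A
    · have hhB : h ∉ B := fun hc => (hw.1 h (by simp)).2 ⟨hhA, hc⟩
      by_cases huB : z * h ∈ B
      · -- z*h lands in the intersection
        have huA : z * h ∈ A := mul_mem hzA hhA
        have := mul_letter_inter huA huB t (red_tail hw)
        rcases this with h1 | ⟨w', h1, h2, h3⟩
        · refine Or.inl ⟨?_, ?_⟩
          · simpa [List.prod_cons, mul_assoc] using h1.1
          · simpa [List.prod_cons, mul_assoc] using h1.2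
        · refine Or.inr ⟨w', h1, ?_, ?_⟩
          · rw [h2]; simp [List.prod_cons, mul_assoc]
          · exact h3.trans (by simp; omega)
      · refine Or.inr ⟨(z * h) :: t, red_congr_head hw (mul_mem_cancel_left hzA)
          (iff_of_false huB hhB), by simp [List.prod_cons, mul_assoc], by simp⟩
    · refine Or.inr ⟨z :: h :: t, ?_, by simp [List.prod_cons, mul_assoc], by simp⟩
      refine red_cons (Or.inl hzA) (fun hc => hzB hc.2) hw ?_
      intro y hy
      simp only [List.head?_cons, Option.mem_def, Option.some.injEq] at hy
      subst hy
      exact ⟨fun hc => hhA hc.2, fun hc => hzB hc.1⟩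

lemma mul_letter {z x : G} (hz : z ∈ A ∨ z ∈ B) (hx : HasRed A B x) :
    HasRed A B (z * x) := by
  rcases hx with ⟨h1, h2⟩ | ⟨w, hw, rfl⟩
  · by_cases hzA : z ∈ A <;> by_cases hzB : z ∈ B
    · exact Or.inl ⟨mul_mem hzA h1, mul_mem hzB h2⟩
    · exact Or.inr ⟨[z * x], red_singleton (Or.inl (mul_mem hzA h1))
        (fun hc => hzB ((mul_mem_cancel_right h2).1 hc.2)), by simp⟩
    · exact Or.inr ⟨[z * x], red_singleton (Or.inr (mul_mem hzB h2))
        (fun hc => hzA ((mul_mem_cancel_right h1).1 hc.1)), by simp⟩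
    · exact absurd hz (by simp [hzA, hzB])
  · by_cases hzA : z ∈ A <;> by_cases hzB : z ∈ B
    · rcases mul_letter_inter hzA hzB w hw with h1 | ⟨w', h1, h2, _⟩
      · exact Or.inl h1
      · exact Or.inr ⟨w', h1, h2⟩
    · rcases mul_letter_A hzA hzB w hw with h1 | ⟨w', h1, h2, _⟩
      · exact Or.inl h1
      · exact Or.inr ⟨w', h1, h2⟩
    · have := mul_letter_A (A := B) (B := A) hzB hzA w (red_comm hw)
      rcases this with h1 | ⟨w', h1, h2, _⟩
      · exact Or.inl ⟨h1.2, h1.1⟩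
      · exact Or.inr ⟨w', red_comm h1, h2⟩
    · exact absurd hz (by simp [hzA, hzB])

lemma word_mul {x : G} (hx : HasRed A B x) :
    ∀ u : List G, IsReducedWord A B u → HasRed A B (u.prod * x) := by
  intro u
  induction u with
  | nil => intro _; simpa using hx
  | cons h t IH =>
    intro hu
    have h1 : HasRed A B (t.prod * x) := IH (red_tail hu)
    have h2 := (hu.1 h (by simp)).1
    have := mul_letter h2 h1
    simpa [List.prod_cons, mul_assoc] using this

lemma hasRed_mul {x y : G} (hx : HasRed A B x) (hy : HasRed A B y) : HasRed A B (x * y) := by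
  rcases hx with ⟨h1, h2⟩ | ⟨w, hw, rfl⟩
  · exact mul_letter (Or.inl h1) hy
  · exact word_mul hy w hw

lemma hasRed_inv {x : G} (hx : HasRed A B x) : HasRed A B x⁻¹ := by
  rcases hx with ⟨h1, h2⟩ | ⟨w, hw, rfl⟩
  · exact Or.inl ⟨inv_mem h1, inv_mem h2⟩
  · exact Or.inr ⟨(w.map fun x => x⁻¹).reverse, red_invRev hw, prod_invRev w⟩

lemma exists_reduced (hG : IsAmalgamatedProduct A B) (x : G) : HasRed A B x := by
  have hx : x ∈ Subgroup.closure ((A : Set G) ∪ (B : Set G)) := by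
    rw [Subgroup.closure_union, Subgroup.closure_eq, Subgroup.closure_eq, hG.1]
    exact Subgroup.mem_top x
  induction hx using Subgroup.closure_induction with
  | mem z hz =>
    by_cases hzA : z ∈ A <;> by_cases hzB : z ∈ B
    · exact Or.inl ⟨hzA, hzB⟩
    · exact Or.inr ⟨[z], red_singleton (Or.inl hzA) (fun hc => hzB hc.2), by simp⟩
    · exact Or.inr ⟨[z], red_singleton (Or.inr hzB) (fun hc => hzA hc.1), by simp⟩
    · exact absurd hz (by simp [hzA, hzB])
  | one => exact Or.inl ⟨one_mem A, one_mem B⟩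
  | mul a b _ _ ha hb => exact hasRed_mul ha hb
  | inv a _ ha => exact hasRed_inv ha

lemma amalgLen_le {w : List G} {x : G} (hw : IsReducedWord A B w) (hp : w.prod = x) :
    amalgLen A B x ≤ w.length := Nat.sInf_le ⟨w, hw, hp, rfl⟩

lemma amalgLen_eq (hG : IsAmalgamatedProduct A B) {w : List G} {x : G}
    (hw : IsReducedWord A B w) (hp : w.prod = x) : amalgLen A B x = w.length := by
  refine le_antisymm (amalgLen_le hw hp) (le_csInf ⟨w.length, w, hw, hp, rfl⟩ ?_)
  rintro b ⟨v, hv, hvp, rfl⟩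
  exact ((rigidity hG hw hv (by rw [hp, hvp])).1).le

lemma amalgLen_inter (hG : IsAmalgamatedProduct A B) {x : G} (h1 : x ∈ A) (h2 : x ∈ B) :
    amalgLen A B x = 0 := by
  unfold amalgLen
  rw [Nat.sInf_eq_zero]
  rcases Set.eq_empty_or_nonempty {r | ∃ w : List G, IsReducedWord A B w ∧ w.prod = x ∧
      w.length = r} with he | ⟨r, w, hw, hp, hr⟩
  · exact Or.inr he
  · have : w = [] := red_nil_of_inter hG hw (hp ▸ h1) (hp ▸ h2)
    subst this
    exact Or.inl ⟨[], hw, hp, rfl⟩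

lemma amalgLen_comm (x : G) : amalgLen A B x = amalgLen B A x := by
  unfold amalgLen
  congr 1
  ext r
  constructor <;> rintro ⟨w, hw, hp, rfl⟩ <;> exact ⟨w, red_comm hw, hp, rfl⟩

lemma amalgLen_inv_le (hG : IsAmalgamatedProduct A B) (x : G) :
    amalgLen A B x⁻¹ ≤ amalgLen A B x := by
  rcases exists_reduced hG x with ⟨h1, h2⟩ | ⟨w, hw, rfl⟩
  · rw [amalgLen_inter hG (inv_mem h1) (inv_mem h2), amalgLen_inter hG h1 h2]
  · rw [amalgLen_eq hG hw rfl]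
    have := amalgLen_le (red_invRev hw) (prod_invRev w)
    simpa using this

lemma amalgLen_inv (hG : IsAmalgamatedProduct A B) (x : G) :
    amalgLen A B x⁻¹ = amalgLen A B x :=
  le_antisymm (amalgLen_inv_le hG x)
    (by simpa using amalgLen_inv_le hG x⁻¹)

lemma amalgLen_le_one (hG : IsAmalgamatedProduct A B) {e : G} (he : e ∈ A ∨ e ∈ B) :
    amalgLen A B e ≤ 1 := by
  by_cases heA : e ∈ A <;> by_cases heB : e ∈ B
  · rw [amalgLen_inter hG heA heB]; omega
  · exact (amalgLen_le (red_singleton (Or.inl heA) (fun hc => heB hc.2)) (by simp)).trans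
      (by simp)
  · exact (amalgLen_le (red_singleton (Or.inr heB) (fun hc => heA hc.1)) (by simp)).trans
      (by simp)
  · exact absurd he (by simp [heA, heB])

lemma amalgLen_mul_letter (hG : IsAmalgamatedProduct A B) {z : G} (x : G)
    (hz : z ∈ A ∨ z ∈ B) : amalgLen A B (z * x) ≤ amalgLen A B x + 1 := by
  by_cases hx : x ∈ A ∧ x ∈ B
  · by_cases hzA : z ∈ A <;> by_cases hzB : z ∈ B
    · rw [amalgLen_inter hG (mul_mem hzA hx.1) (mul_mem hzB hx.2)]; omega
    · have := amalgLen_le (x := z * x) (red_singleton (Or.inl (mul_mem hzA hx.1))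
        (fun hc => hzB ((mul_mem_cancel_right hx.2).1 hc.2))) (by simp)
      simp only [List.length_cons, List.length_nil] at this
      omega
    · have := amalgLen_le (x := z * x) (red_singleton (Or.inr (mul_mem hzB hx.2))
        (fun hc => hzA ((mul_mem_cancel_right hx.1).1 hc.1))) (by simp)
      simp only [List.length_cons, List.length_nil] at this
      omega
    · exact absurd hz (by simp [hzA, hzB])
  · rcases exists_reduced hG x with h | ⟨w, hw, rfl⟩
    · exact absurd h hx
    · rw [amalgLen_eq hG hw rfl]
      by_cases hzA : z ∈ A <;> by_cases hzB : z ∈ B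
      · rcases mul_letter_inter hzA hzB w hw with h1 | ⟨w', h1, h2, h3⟩
        · rw [amalgLen_inter hG h1.1 h1.2]; omega
        · exact (amalgLen_le h1 h2).trans (by omega)
      · rcases mul_letter_A hzA hzB w hw with h1 | ⟨w', h1, h2, h3⟩
        · rw [amalgLen_inter hG h1.1 h1.2]; omega
        · exact (amalgLen_le h1 h2).trans (by omega)
      · rcases mul_letter_A (A := B) (B := A) hzB hzA w (red_comm hw) with h1 | ⟨w', h1, h2, h3⟩
        · rw [amalgLen_inter hG h1.2 h1.1]; omega
        · rw [amalgLen_comm]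
          exact (amalgLen_le (A := B) (B := A) h1 h2).trans (by omega)
      · exact absurd hz (by simp [hzA, hzB])

lemma amalgLen_mul_letter_right (hG : IsAmalgamatedProduct A B) {z : G} (x : G)
    (hz : z ∈ A ∨ z ∈ B) : amalgLen A B (x * z) ≤ amalgLen A B x + 1 := by
  have h := amalgLen_mul_letter hG (z := z⁻¹) x⁻¹ (hz.imp inv_mem inv_mem)
  calc amalgLen A B (x * z) = amalgLen A B ((x * z)⁻¹) := (amalgLen_inv hG _).symm
    _ = amalgLen A B (z⁻¹ * x⁻¹) := by rw [mul_inv_rev]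
    _ ≤ amalgLen A B x⁻¹ + 1 := h
    _ = amalgLen A B x + 1 := by rw [amalgLen_inv hG]

lemma amalgLen_conj_le (hG : IsAmalgamatedProduct A B) {e : G} (he : e ∈ A ∨ e ∈ B) :
    ∀ w : List G, IsReducedWord A B w →
      amalgLen A B (w.prod * e * w.prod⁻¹) ≤ 2 * w.length + 1 := by
  intro w
  induction w with
  | nil => intro _; simpa using amalgLen_le_one hG he
  | cons h t IH =>
    intro hw
    have hh := (hw.1 h (by simp)).1
    have heq : (h :: t).prod * e * ((h :: t).prod)⁻¹ =
        h * ((t.prod * e * t.prod⁻¹) * h⁻¹) := by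
      simp only [List.prod_cons, mul_inv_rev]
      group
    rw [heq]
    have s1 := amalgLen_mul_letter_right hG (t.prod * e * t.prod⁻¹) (hh.imp inv_mem inv_mem)
    have s2 := amalgLen_mul_letter hG ((t.prod * e * t.prod⁻¹) * h⁻¹) hh
    have s3 := IH (red_tail hw)
    simp only [List.length_cons]
    omega

lemma notMem_of_one_lt_amalgLen (hG : IsAmalgamatedProduct A B) {x : G}
    (h : 1 < amalgLen A B x) : x ∉ A ∧ x ∉ B := by
  constructor <;> intro hx
  · by_cases hxB : x ∈ B
    · rw [amalgLen_inter hG hx hxB] at h; omega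
    · have := amalgLen_le (red_singleton (Or.inl hx) (fun hc => hxB hc.2)) rfl
      simp at this; omega
  · by_cases hxA : x ∈ A
    · rw [amalgLen_inter hG hxA hx] at h; omega
    · have := amalgLen_le (red_singleton (Or.inr hx) (fun hc => hxA hc.1)) rfl
      simp at this; omega

/-- The reduced word `u ++ e :: (u⁻¹ reversed)` for a conjugate `u.prod * e * u.prod⁻¹`,
when the last letter of `u` is in `B \ A` and `e ∈ A \ B`. -/
lemma conj_word_red (hu : IsReducedWord A B u) (hne : u ≠ [])
    (hlastB : u.getLast hne ∈ B) (hlastA : u.getLast hne ∉ A)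
    {e : G} (heA : e ∈ A) (heB : e ∉ B) :
    IsReducedWord A B (u ++ e :: (u.map fun x => x⁻¹).reverse) ∧
      (u ++ e :: (u.map fun x => x⁻¹).reverse).prod = u.prod * e * u.prod⁻¹ ∧
      (u ++ e :: (u.map fun x => x⁻¹).reverse).length = 2 * u.length + 1 := by
  have hinv := red_invRev hu
  refine ⟨⟨?_, ?_⟩, ?_, ?_⟩
  · intro x hx
    rcases List.mem_append.1 hx with hx | hx
    · exact hu.1 x hx
    · rcases List.mem_cons.1 hx with rfl | hx
      · exact ⟨Or.inl heA, fun hc => heB hc.2⟩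
      · exact hinv.1 x hx
  · unfold List.Chain'
    rw [List.isChain_append]
    refine ⟨hu.2, ?_, ?_⟩
    · rw [List.isChain_cons]
      refine ⟨?_, hinv.2⟩
      intro y hy
      have : ((u.map fun x => x⁻¹).reverse).head? = some (u.getLast hne)⁻¹ := by
        rw [List.head?_reverse, List.getLast?_map, List.getLast?_eq_getLast hne]
        rfl
      rw [this] at hy
      simp only [Option.mem_def, Option.some.injEq] at hy
      subst hy
      exact ⟨fun hc => hlastA (inv_mem_iff.1 hc.2), fun hc => heB hc.1⟩
    · intro x hx y hy
      rw [List.getLast?_eq_getLast hne] at hx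
      simp only [Option.mem_def, Option.some.injEq] at hx
      subst hx
      simp only [List.head?_cons, Option.mem_def, Option.some.injEq] at hy
      subst hy
      exact ⟨fun hc => hlastA hc.1, fun hc => heB hc.2⟩
  · rw [List.prod_append, List.prod_cons, prod_invRev]
    group
  · simp only [List.length_append, List.length_cons, List.length_reverse, List.length_map]
    omega

lemma main_aux (hG : IsAmalgamatedProduct A B)
    (n : ℕ) (g : Fin (n + 1) → G) (H : Subgroup G)
    (hH : H = Subgroup.closure (Set.range g))
    (hmax : ∀ j, amalgLen A B (g j) ≤ amalgLen A B (g 0))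
    (hlen : 1 < amalgLen A B (g 0))
    (y : G) (hy : ∀ h ∈ H, y⁻¹ * h * y ∈ A)
    (hmin : ∀ z : G, ((∀ h ∈ H, z⁻¹ * h * z ∈ A) ∨ (∀ h ∈ H, z⁻¹ * h * z ∈ B)) →
      amalgLen A B y ≤ amalgLen A B z) :
    ∃ s : ℕ, 1 ≤ s ∧ amalgLen A B (g 0) = 2 * s + 1 ∧
      ∀ w : List G, IsReducedWord A B w → w.prod = g 0 →
        ∀ h ∈ H, ((w.take s).prod)⁻¹ * h * (w.take s).prod ∈ A := by
  have hgH : ∀ j, g j ∈ H := fun j => hH ▸ Subgroup.subset_closure ⟨j, rfl⟩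
  have hg0 := notMem_of_one_lt_amalgLen hG hlen
  have hynot : ¬ (y ∈ A ∧ y ∈ B) := by
    rintro ⟨hyA, hyB⟩
    refine hg0.1 ?_
    have h1 := hy (g 0) (hgH 0)
    have h2 : g 0 = y * (y⁻¹ * g 0 * y) * y⁻¹ := by group
    rw [h2]
    exact mul_mem (mul_mem hyA h1) (inv_mem hyA)
  obtain ⟨u, hu, hup⟩ : ∃ u, IsReducedWord A B u ∧ u.prod = y := by
    rcases exists_reduced hG y with h | h
    exacts [absurd h hynot, h]
  have hune : u ≠ [] := by
    rintro rfl
    rw [← hup] at hynot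
    exact hynot ⟨by simpa using one_mem A, by simpa using one_mem B⟩
  set t := u.length with ht
  have hty : amalgLen A B y = t := amalgLen_eq hG hu hup
  have ht1 : 1 ≤ t := List.length_pos_iff.2 hune
  set L := u.getLast hune with hL
  set u' := u.dropLast with hu'
  have hu'red : IsReducedWord A B u' := red_prefix hu (List.dropLast_prefix u)
  have hsplit : u'.prod * L = y := by
    rw [← hup, hu', hL, ← List.prod_singleton (x := u.getLast hune), ← List.prod_append,
      List.dropLast_append_getLast hune]
  have hu'len : amalgLen A B u'.prod = t - 1 := by
    rw [amalgLen_eq hG hu'red rfl, hu', List.length_dropLast]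
  have hLmem := hu.1 L (List.getLast_mem hune)
  have hconjsplit : ∀ h : G, u'.prod⁻¹ * h * u'.prod = L * (y⁻¹ * h * y) * L⁻¹ := by
    intro h
    rw [← hsplit]
    group
  have hLA : L ∉ A := by
    intro hLA
    have hz : ∀ h ∈ H, u'.prod⁻¹ * h * u'.prod ∈ A := fun h hh => by
      rw [hconjsplit]
      exact mul_mem (mul_mem hLA (hy h hh)) (inv_mem hLA)
    have := hmin u'.prod (Or.inl hz)
    omega
  have hLB : L ∈ B := hLmem.1.resolve_left hLA
  have hnotall : ¬ ∀ j, y⁻¹ * g j * y ∈ B := by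
    intro hall
    have hHint : ∀ h ∈ H, y⁻¹ * h * y ∈ A ∧ y⁻¹ * h * y ∈ B := by
      intro h hh
      rw [hH] at hh
      induction hh using Subgroup.closure_induction with
      | mem z hz =>
        obtain ⟨j, rfl⟩ := hz
        exact ⟨hy _ (hgH j), hall j⟩
      | one => exact ⟨by simpa using one_mem A, by simpa using one_mem B⟩
      | mul a b _ _ iha ihb =>
        have hrw : y⁻¹ * (a * b) * y = (y⁻¹ * a * y) * (y⁻¹ * b * y) := by group
        exact ⟨hrw ▸ mul_mem iha.1 ihb.1, hrw ▸ mul_mem iha.2 ihb.2⟩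
      | inv a _ iha =>
        have hrw : y⁻¹ * a⁻¹ * y = (y⁻¹ * a * y)⁻¹ := by group
        exact ⟨hrw ▸ inv_mem iha.1, hrw ▸ inv_mem iha.2⟩
    have hz : ∀ h ∈ H, u'.prod⁻¹ * h * u'.prod ∈ B := fun h hh => by
      rw [hconjsplit]
      exact mul_mem (mul_mem hLB (hHint h hh).2) (inv_mem hLB)
    have := hmin u'.prod (Or.inr hz)
    omega
  push_neg at hnotall
  obtain ⟨j0, hj0⟩ := hnotall
  have hc1A : y⁻¹ * g j0 * y ∈ A := hy _ (hgH j0)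
  obtain ⟨hW1, hW2, hW3⟩ := conj_word_red hu hune hLB hLA hc1A hj0
  have hlenj0 : amalgLen A B (g j0) = 2 * t + 1 := by
    have := amalgLen_eq hG hW1 (show _ = g j0 by rw [hW2, hup]; group)
    rw [this, hW3]
  have hupper : amalgLen A B (g 0) ≤ 2 * t + 1 := by
    have h0 : g 0 = u.prod * (y⁻¹ * g 0 * y) * u.prod⁻¹ := by rw [hup]; group
    calc amalgLen A B (g 0)
        = amalgLen A B (u.prod * (y⁻¹ * g 0 * y) * u.prod⁻¹) := by rw [← h0]
      _ ≤ 2 * u.length + 1 := amalgLen_conj_le hG (Or.inl (hy _ (hgH 0))) u hu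
  have hlower := hmax j0
  rw [hlenj0] at hlower
  have hg0len : amalgLen A B (g 0) = 2 * t + 1 := le_antisymm hupper hlower
  have hc0A : y⁻¹ * g 0 * y ∈ A := hy _ (hgH 0)
  have hc0B : y⁻¹ * g 0 * y ∉ B := by
    intro hc0B
    have he : L * (y⁻¹ * g 0 * y) * L⁻¹ ∈ B := mul_mem (mul_mem hLB hc0B) (inv_mem hLB)
    have hbnd := amalgLen_conj_le hG (Or.inr he) u' hu'red
    have h0 : u'.prod * (L * (y⁻¹ * g 0 * y) * L⁻¹) * u'.prod⁻¹ = g 0 := by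
      rw [← hsplit]
      group
    rw [h0] at hbnd
    have hu'l : u'.length = t - 1 := by rw [hu', List.length_dropLast]
    omega
  obtain ⟨hV1, hV2, hV3⟩ := conj_word_red hu hune hLB hLA hc0A hc0B
  refine ⟨t, ht1, hg0len, ?_⟩
  intro w hw hwp h hh
  have hgprod : (u ++ (y⁻¹ * g 0 * y) :: (u.map fun x => x⁻¹).reverse).prod = g 0 := by
    rw [hV2, hup]
    group
  obtain ⟨-, hpref⟩ := rigidity hG hw hV1 (by rw [hwp, hgprod])
  have hpre := hpref t
  have htake : ((u ++ (y⁻¹ * g 0 * y) :: (u.map fun x => x⁻¹).reverse).take t) = u :=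
    List.take_left' ht.symm
  rw [htake] at hpre
  have hkey : (w.take t).prod⁻¹ * h * (w.take t).prod =
      ((w.take t).prod⁻¹ * u.prod) * (y⁻¹ * h * y) * ((w.take t).prod⁻¹ * u.prod)⁻¹ := by
    rw [hup]
    group
  rw [hkey]
  exact mul_mem (mul_mem hpre.1 (hy h hh)) (inv_mem hpre.1)

end AmalgProof

theorem stmt1 (A B : Subgroup G) (hG : IsAmalgamatedProduct A B)
    (n : ℕ) (g : Fin (n + 1) → G) (H : Subgroup G)
    (hH : H = Subgroup.closure (Set.range g))
    (hmax : ∀ j, amalgLen A B (g j) ≤ amalgLen A B (g 0))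
    (hconj : ∃ x : G, (∀ h ∈ H, x⁻¹ * h * x ∈ A) ∨ (∀ h ∈ H, x⁻¹ * h * x ∈ B))
    (hlen : 1 < amalgLen A B (g 0)) :
    ∃ s : ℕ, 1 ≤ s ∧ amalgLen A B (g 0) = 2 * s + 1 ∧
      ∀ w : List G, IsReducedWord A B w → w.prod = g 0 →
        ((∀ h ∈ H, ((w.take s).prod)⁻¹ * h * (w.take s).prod ∈ A) ∨
          (∀ h ∈ H, ((w.take s).prod)⁻¹ * h * (w.take s).prod ∈ B)) := by
  classical
  obtain ⟨x, hx⟩ := hconj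
  have hne : {m : ℕ | ∃ z : G, ((∀ h ∈ H, z⁻¹ * h * z ∈ A) ∨ (∀ h ∈ H, z⁻¹ * h * z ∈ B)) ∧
      amalgLen A B z = m}.Nonempty := ⟨amalgLen A B x, x, hx, rfl⟩
  obtain ⟨y, hyS, hym⟩ := Nat.sInf_mem hne
  have hmin : ∀ z : G, ((∀ h ∈ H, z⁻¹ * h * z ∈ A) ∨ (∀ h ∈ H, z⁻¹ * h * z ∈ B)) →
      amalgLen A B y ≤ amalgLen A B z := fun z hz => by
    rw [hym]; exact Nat.sInf_le ⟨z, hz, rfl⟩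
  rcases hyS with hyA | hyB
  · obtain ⟨s, hs1, hs2, hs3⟩ := AmalgProof.main_aux hG n g H hH hmax hlen y hyA hmin
    exact ⟨s, hs1, hs2, fun w hw hp => Or.inl (hs3 w hw hp)⟩
  · have hG' := AmalgProof.amalg_comm hG
    have hcomm : ∀ x : G, amalgLen B A x = amalgLen A B x := fun x =>
      AmalgProof.amalgLen_comm x
    have hmax' : ∀ j, amalgLen B A (g j) ≤ amalgLen B A (g 0) := fun j => by
      rw [hcomm, hcomm]; exact hmax j
    have hlen' : 1 < amalgLen B A (g 0) := by
      rw [hcomm]; exact hlen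
    have hmin' : ∀ z : G, ((∀ h ∈ H, z⁻¹ * h * z ∈ B) ∨ (∀ h ∈ H, z⁻¹ * h * z ∈ A)) →
        amalgLen B A y ≤ amalgLen B A z := fun z hz => by
      rw [hcomm, hcomm]; exact hmin z hz.symm
    obtain ⟨s, hs1, hs2, hs3⟩ := AmalgProof.main_aux hG' n g H hH hmax' hlen' y hyB hmin'
    refine ⟨s, hs1, ?_, fun w hw hp => Or.inr (hs3 w (AmalgProof.red_comm hw) hp)⟩
    rw [← hcomm]
    exact hs2
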